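/- Let n ≥ 2 and let H be an n×n real symmetric matrix with nonnegative entries, zero diagonal, that is irreducible (for all indices i ≠ j there exists a positive integer k with (H^k)_{ij} > 0), and with eigenvalues λ₁ ≤ ⋯ ≤ λₙ where λ₁ < λₙ. Suppose there is perfect state transfer from vertex 1 to vertex 2 at time t₀, i.e. |(exp(i t₀ H))₁₂| = 1, and suppose that for some h with 0 < |h| < π/(λₙ − λ₁) equality holds in the timing-error bound: |(exp(i(t₀+h)H))₁₂|² = (1/4)·|e^{i h λ₁} + e^{i h λₙ}|². Then n = 2 and there exists c > 0 such that H is c times the matrix [[0,1],[1,0]]. -/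

import Mathlib

open Matrix

/-- The time evolution `exp(i t H)` of a real symmetric Hamiltonian `H`,
regarded as a complex matrix. -/
noncomputable def timeEvo {n : ℕ} (H : Matrix (Fin n) (Fin n) ℝ) (t : ℝ) :
    Matrix (Fin n) (Fin n) ℂ :=
  NormedSpace.exp (Complex.I • (t : ℂ) • H.map (fun x => (x : ℂ)))

private theorem entry_formula {n : ℕ} (H : Matrix (Fin n) (Fin n) ℝ)
    (μ : Fin n → ℝ) (Q : Matrix (Fin n) (Fin n) ℝ) (hQ : Qᵀ * Q = 1)
    (hHQ : H = Qᵀ * Matrix.diagonal μ * Q) (t : ℝ) (a b : Fin n) :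
    timeEvo H t a b
      = ∑ k, ((Q k a : ℂ) * (Q k b : ℂ) * Complex.exp (Complex.I * t * (μ k : ℂ))) := by
  classical
  set φ : ℝ →+* ℂ := Complex.ofRealHom
  have hQQt : Q * Qᵀ = 1 := mul_eq_one_comm.mp hQ
  set Qc : Matrix (Fin n) (Fin n) ℂ := Q.map φ with hQcdef
  have hQct : Qᵀ.map φ = Qcᵀ := by simp [Qc, Matrix.transpose_map]
  have h1 : Qcᵀ * Qc = 1 := by
    rw [← hQct, ← Matrix.map_mul, hQ, Matrix.map_one φ φ.map_zero φ.map_one]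
  have h2 : Qc * Qcᵀ = 1 := mul_eq_one_comm.mp h1
  set U : (Matrix (Fin n) (Fin n) ℂ)ˣ := ⟨Qcᵀ, Qc, h1, h2⟩ with hU
  have hUinv : (↑U⁻¹ : Matrix (Fin n) (Fin n) ℂ) = Qc := rfl
  have hmap : Complex.I • (t : ℂ) • H.map (fun x => (x : ℂ))
      = Qcᵀ * Matrix.diagonal (fun k => Complex.I * t * (μ k : ℂ)) * Qc := by
    have : H.map (fun x => (x : ℂ)) = Qcᵀ * Matrix.diagonal (fun k => (μ k : ℂ)) * Qc := by
      have : H.map φ = (Qᵀ.map φ) * (Matrix.diagonal μ).map φ * Q.map φ := by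
        rw [hHQ, Matrix.map_mul, Matrix.map_mul]
      rw [hQct, Matrix.diagonal_map φ.map_zero] at this; exact this
    rw [show (fun x : ℝ => (x : ℂ)) = (φ : ℝ → ℂ) from rfl] at *
    rw [this]
    rw [smul_smul, ← smul_mul_assoc, ← mul_smul_comm]
    have hd : (Complex.I * (t:ℂ)) • Matrix.diagonal (fun k => (μ k : ℂ))
        = Matrix.diagonal (fun k => Complex.I * t * (μ k : ℂ)) := by
      ext i j
      by_cases hij : i = j <;>
        simp [hij, Matrix.diagonal_apply, Matrix.smul_apply, mul_assoc]
    rw [hd]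
  have hconj : NormedSpace.exp (Qcᵀ * Matrix.diagonal (fun k => Complex.I * t * (μ k : ℂ)) * Qc)
      = Qcᵀ * NormedSpace.exp (Matrix.diagonal (fun k => Complex.I * t * (μ k : ℂ))) * Qc :=
    Matrix.exp_units_conj U _
  rw [timeEvo, hmap, hconj, Matrix.exp_diagonal]
  have hexp : ∀ k : Fin n, NormedSpace.exp (Complex.I * t * (μ k : ℂ))
      = Complex.exp (Complex.I * t * (μ k : ℂ)) := fun k => by
    rw [Complex.exp_eq_exp_ℂ]
  rw [Matrix.mul_apply]
  refine Finset.sum_congr rfl fun k _ => ?_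
  rw [Matrix.mul_apply]
  rw [Finset.sum_eq_single k]
  · rw [Matrix.diagonal_apply_eq, Pi.coe_exp _ k, hexp k]
    show (Q k a : ℂ) * _ * (Q k b : ℂ) = _
    ring
  · intro l _ hl
    simp [Matrix.diagonal_apply_ne _ hl]
  · simp

private lemma re_eq_abs_imp {z : ℂ} (h : z.re = ‖z‖) : z = (z.re : ℂ) := by
  have h2 : ‖z‖ ^ 2 = z.re ^ 2 + z.im ^ 2 := by
    rw [Complex.sq_norm, Complex.normSq_apply]; ring
  have h3 : ‖z‖ ^ 2 = z.re ^ 2 := by rw [h]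
  have him2 : z.im ^ 2 = 0 := by linarith
  have him : z.im = 0 := by
    have := pow_eq_zero_iff (n := 2) (by norm_num) |>.mp him2
    exact this
  exact Complex.ext rfl him

private lemma phase_align {ι : Type*} [Fintype ι] (T : ι → ℂ) (w : ι → ℝ) (γ : ℂ)
    (hw : ∀ k, ‖T k‖ = w k) (hsum : ∑ k, T k = γ)
    (hγ : ‖γ‖ = 1) (hw1 : ∑ k, w k = 1) :
    ∀ k, T k = (w k : ℂ) * γ := by
  classical
  have hre_le : ∀ k, (T k * (starRingEnd ℂ) γ).re ≤ w k := by
    intro k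
    calc (T k * (starRingEnd ℂ) γ).re ≤ ‖T k * (starRingEnd ℂ) γ‖ :=
          Complex.re_le_norm _
      _ = w k := by rw [norm_mul, Complex.norm_conj, hγ, hw, mul_one]
  have hre_sum : ∑ k, (T k * (starRingEnd ℂ) γ).re = 1 := by
    have : ∑ k, T k * (starRingEnd ℂ) γ = γ * (starRingEnd ℂ) γ := by
      rw [← Finset.sum_mul, hsum]
    calc ∑ k, (T k * (starRingEnd ℂ) γ).re = (∑ k, T k * (starRingEnd ℂ) γ).re :=
          (Complex.re_sum _ _).symm
      _ = (γ * (starRingEnd ℂ) γ).re := by rw [this]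
      _ = ‖γ‖ ^ 2 := by
          rw [Complex.mul_conj]; simp [Complex.sq_norm]
      _ = 1 := by rw [hγ]; norm_num
  have hzero : ∑ k, (w k - (T k * (starRingEnd ℂ) γ).re) = 0 := by
    rw [Finset.sum_sub_distrib, hw1, hre_sum, sub_self]
  have heach : ∀ k ∈ Finset.univ, w k - (T k * (starRingEnd ℂ) γ).re = 0 :=
    (Finset.sum_eq_zero_iff_of_nonneg (fun k _ => sub_nonneg.mpr (hre_le k))).mp hzero
  intro k
  have hre : (T k * (starRingEnd ℂ) γ).re = w k := by
    have := heach k (Finset.mem_univ k); linarith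
  have habs : ‖T k * (starRingEnd ℂ) γ‖ = w k := by
    rw [norm_mul, Complex.norm_conj, hγ, hw, mul_one]
  have hz : T k * (starRingEnd ℂ) γ = ((w k : ℝ) : ℂ) := by
    have := re_eq_abs_imp (z := T k * (starRingEnd ℂ) γ) (by rw [hre, habs])
    rw [this, hre]
  have hγγ : (starRingEnd ℂ) γ * γ = 1 := by
    rw [mul_comm, Complex.mul_conj]
    norm_cast
    rw [← Complex.sq_norm, hγ]; norm_num
  calc T k = T k * ((starRingEnd ℂ) γ * γ) := by rw [hγγ, mul_one]
    _ = (T k * (starRingEnd ℂ) γ) * γ := by ring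
    _ = (w k : ℂ) * γ := by rw [hz]

private lemma cos_equal {ι : Type*} [Fintype ι] (w : ι → ℝ) (θ : ι → ℝ) (d : ℝ)
    (hw : ∀ k, 0 ≤ w k) (hw1 : ∑ k, w k = 1) (hd0 : 0 < d) (hd : d < Real.pi / 2)
    (hθ : ∀ k, |θ k| ≤ d)
    (habs : ‖∑ k, ((w k : ℝ) : ℂ) * Complex.exp (Complex.I * (θ k : ℂ))‖
      = Real.cos d) :
    ∀ k, w k = 0 ∨ |θ k| = d := by
  classical
  have hcosd_pos : 0 < Real.cos d := Real.cos_pos_of_mem_Ioo ⟨by linarith [Real.pi_pos], hd⟩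
  have hcos_ge : ∀ k, Real.cos d ≤ Real.cos (θ k) := by
    intro k
    rw [← Real.cos_abs (θ k)]
    exact Real.cos_le_cos_of_nonneg_of_le_pi (abs_nonneg _)
      (by linarith [Real.pi_pos]) (hθ k)
  have hre : (∑ k, ((w k : ℝ) : ℂ) * Complex.exp (Complex.I * (θ k : ℂ))).re
      = ∑ k, w k * Real.cos (θ k) := by
    rw [Complex.re_sum]
    refine Finset.sum_congr rfl fun k _ => ?_
    rw [show Complex.I * (θ k : ℂ) = ((θ k : ℝ) : ℂ) * Complex.I by ring]
    rw [Complex.re_ofReal_mul, Complex.exp_ofReal_mul_I_re]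
  have hre_le : ∑ k, w k * Real.cos (θ k) ≤ Real.cos d := by
    rw [← hre, ← habs]
    exact Complex.re_le_norm _
  have hge : ∀ k, w k * Real.cos d ≤ w k * Real.cos (θ k) := fun k =>
    mul_le_mul_of_nonneg_left (hcos_ge k) (hw k)
  have hsum_ge : Real.cos d ≤ ∑ k, w k * Real.cos (θ k) := by
    calc Real.cos d = ∑ k, w k * Real.cos d := by rw [← Finset.sum_mul, hw1, one_mul]
      _ ≤ ∑ k, w k * Real.cos (θ k) := Finset.sum_le_sum fun k _ => hge k
  have hzero : ∑ k, (w k * Real.cos (θ k) - w k * Real.cos d) = 0 := by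
    rw [Finset.sum_sub_distrib]
    have : ∑ k, w k * Real.cos d = Real.cos d := by rw [← Finset.sum_mul, hw1, one_mul]
    rw [this]
    linarith
  have heach := (Finset.sum_eq_zero_iff_of_nonneg
    (fun k _ => by linarith [hge k] : ∀ k ∈ Finset.univ,
      0 ≤ w k * Real.cos (θ k) - w k * Real.cos d)).mp hzero
  intro k
  by_cases hwk : w k = 0
  · exact Or.inl hwk
  · right
    have hwk' : 0 < w k := lt_of_le_of_ne (hw k) (Ne.symm hwk)
    have h1 : w k * Real.cos (θ k) - w k * Real.cos d = 0 := heach k (Finset.mem_univ k)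
    have h2 : Real.cos (θ k) = Real.cos d := by
      have := mul_left_cancel₀ (ne_of_gt hwk') (by linarith : w k * Real.cos (θ k) = w k * Real.cos d)
      exact this
    have h3 : Real.cos |θ k| = Real.cos d := by rw [Real.cos_abs]; exact h2
    exact Real.injOn_cos ⟨abs_nonneg _, (hθ k).trans (by linarith [Real.pi_pos])⟩
      ⟨le_of_lt hd0, by linarith [Real.pi_pos]⟩ h3

/-- Characterisation of equality in the timing-error bound for adjacency matrices: if
`H` is the adjacency matrix of a connected weighted graph (entrywise nonnegative,
symmetric, zero diagonal, irreducible) with perfect state transfer at `t₀`, and for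
some `h` with `0 < |h| < π/(λₙ - λ₁)` the bound
`p(t₀+h) = ¼|e^{ihλ₁} + e^{ihλₙ}|²` is attained, then `n = 2` and `H` is a positive
multiple of `[[0,1],[1,0]]`. -/
theorem stmt10 {n : ℕ} (hn : 2 ≤ n) (H : Matrix (Fin n) (Fin n) ℝ) (hH : H.IsSymm)
    (hnonneg : ∀ i j, 0 ≤ H i j) (hdiag : ∀ i, H i i = 0)
    (hirr : ∀ i j : Fin n, i ≠ j → ∃ k : ℕ, 0 < k ∧ 0 < (H ^ k) i j)
    (μ : Fin n → ℝ) (hmono : Monotone μ)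
    (Q : Matrix (Fin n) (Fin n) ℝ) (hQ : Qᵀ * Q = 1)
    (hHQ : H = Qᵀ * Matrix.diagonal μ * Q)
    (hspread : μ ⟨0, by omega⟩ < μ ⟨n - 1, by omega⟩)
    (t₀ : ℝ)
    (hPST : ‖timeEvo H t₀ ⟨0, by omega⟩ ⟨1, by omega⟩‖ = 1)
    (h : ℝ) (hh0 : 0 < |h|)
    (hh : |h| < Real.pi / (μ ⟨n - 1, by omega⟩ - μ ⟨0, by omega⟩))
    (heq : ‖timeEvo H (t₀ + h) ⟨0, by omega⟩ ⟨1, by omega⟩‖ ^ 2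
      = (1 / 4) * ‖Complex.exp (Complex.I * (h : ℂ) * (μ ⟨0, by omega⟩ : ℂ)) +
          Complex.exp (Complex.I * (h : ℂ) * (μ ⟨n - 1, by omega⟩ : ℂ))‖ ^ 2) :
    n = 2 ∧ ∃ c : ℝ, 0 < c ∧ ∀ i j : Fin n, H i j = if i = j then 0 else c := by
  classical
  have ha' : 0 < n := by omega
  have hb' : 1 < n := by omega
  set a : Fin n := ⟨0, ha'⟩ with hadef
  set b : Fin n := ⟨1, hb'⟩ with hbdef
  have hab : a ≠ b := by
    intro hcon
    have := congrArg Fin.val hcon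
    simp [hadef, hbdef] at this
  set ν₀ : ℝ := μ a with hν₀def
  set ν₁ : ℝ := μ ⟨n - 1, by omega⟩ with hν₁def
  have hν : ν₀ < ν₁ := hspread
  -- orthonormality
  have horth : ∀ i j : Fin n, ∑ k, Q k i * Q k j = if i = j then (1:ℝ) else 0 := by
    intro i j
    have h1 : (Qᵀ * Q) i j = (1 : Matrix (Fin n) (Fin n) ℝ) i j := by rw [hQ]
    rw [Matrix.mul_apply] at h1
    simp only [Matrix.transpose_apply] at h1
    rw [h1, Matrix.one_apply]
  have hsum_wa : ∑ k, Q k a ^ 2 = 1 := by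
    have h0 := horth a a
    rw [if_pos rfl] at h0
    rw [← h0]
    exact Finset.sum_congr rfl fun k _ => by ring
  have hsum_wb : ∑ k, Q k b ^ 2 = 1 := by
    have h0 := horth b b
    rw [if_pos rfl] at h0
    rw [← h0]
    exact Finset.sum_congr rfl fun k _ => by ring
  -- H entries
  have hHent : ∀ i j : Fin n, H i j = ∑ k, Q k i * μ k * Q k j := by
    intro i j
    rw [hHQ, Matrix.mul_apply]
    refine Finset.sum_congr rfl fun k _ => ?_
    rw [Matrix.mul_diagonal]
    simp only [Matrix.transpose_apply]
  -- the PST matrix entry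
  set f : Fin n → ℝ := fun k => Q k a * Q k b with hfdef
  set z : Fin n → ℂ := fun k => Complex.exp (Complex.I * t₀ * (μ k : ℂ)) with hzdef
  have habs_z : ∀ k, ‖z k‖ = 1 := by
    intro k
    rw [hzdef]
    simp [Complex.norm_exp]
  set γ : ℂ := timeEvo H t₀ a b with hγdef
  have hγsum : γ = ∑ k, ((f k : ℝ) : ℂ) * z k := by
    rw [hγdef, entry_formula H μ Q hQ hHQ t₀ a b]
    refine Finset.sum_congr rfl fun k _ => ?_
    rw [hfdef]
    push_cast
    ring
  have hγ1 : ‖γ‖ = 1 := hPST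
  -- Cauchy-Schwarz chain
  have habsf : ∀ k, |f k| = |Q k a| * |Q k b| := fun k => abs_mul _ _
  have hcs : (∑ k, |Q k a| * |Q k b|) ^ 2 ≤ 1 := by
    have := Finset.sum_mul_sq_le_sq_mul_sq Finset.univ (fun k => |Q k a|) (fun k => |Q k b|)
    simp only [sq_abs] at this
    rw [hsum_wa, hsum_wb] at this
    simpa using this
  have hsumf_le : ∑ k, |f k| ≤ 1 := by
    have h0 : (0:ℝ) ≤ ∑ k, |f k| := Finset.sum_nonneg fun k _ => abs_nonneg _
    have : (∑ k, |f k|) ^ 2 ≤ 1 := by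
      rw [show (∑ k, |f k|) = ∑ k, |Q k a| * |Q k b| from
        Finset.sum_congr rfl fun k _ => habsf k]
      exact hcs
    nlinarith
  have hsumf_ge : 1 ≤ ∑ k, |f k| := by
    calc (1:ℝ) = ‖γ‖ := hγ1.symm
      _ ≤ ∑ k, ‖((f k : ℝ) : ℂ) * z k‖ := by
          rw [hγsum]; exact norm_sum_le _ _
      _ = ∑ k, |f k| := by
          refine Finset.sum_congr rfl fun k _ => ?_
          rw [norm_mul, habs_z, mul_one, Complex.norm_real, Real.norm_eq_abs]
  have hsumf : ∑ k, |f k| = 1 := le_antisymm hsumf_le hsumf_ge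
  -- equality in CS ⇒ |Q k a| = |Q k b|
  have hptw : ∀ k, |Q k a| = |Q k b| := by
    have hzero : ∑ k, (|Q k a| - |Q k b|) ^ 2 = 0 := by
      have hexp : ∀ k : Fin n, (|Q k a| - |Q k b|) ^ 2
          = Q k a ^ 2 + Q k b ^ 2 - 2 * |f k| := by
        intro k
        rw [habsf k, sub_sq, sq_abs, sq_abs]
        ring
      rw [Finset.sum_congr rfl fun k _ => hexp k]
      rw [Finset.sum_sub_distrib, Finset.sum_add_distrib, ← Finset.mul_sum,
        hsum_wa, hsum_wb, hsumf]
      ring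
    intro k
    have := (Finset.sum_eq_zero_iff_of_nonneg
      (fun k _ => sq_nonneg (|Q k a| - |Q k b|))).mp hzero k (Finset.mem_univ k)
    have h2 : |Q k a| - |Q k b| = 0 := by
      exact pow_eq_zero_iff (n := 2) (by norm_num) |>.mp this
    linarith
  have hP1 : ∀ k, Q k b ^ 2 = Q k a ^ 2 := by
    intro k; rw [← sq_abs, ← sq_abs (Q k a), hptw k]
  have hfabs : ∀ k, |f k| = Q k a ^ 2 := by
    intro k; rw [habsf k, ← hptw k, ← sq_abs]; ring
  have hsumw : ∑ k, Q k a ^ 2 = 1 := hsum_wa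
  -- phase alignment
  have hT : ∀ k, ((f k : ℝ) : ℂ) * z k = ((Q k a ^ 2 : ℝ) : ℂ) * γ := by
    have := phase_align (fun k => ((f k : ℝ) : ℂ) * z k) (fun k => Q k a ^ 2) γ
      (fun k => by rw [norm_mul, habs_z, mul_one, Complex.norm_real, Real.norm_eq_abs, hfabs k])
      hγsum.symm hγ1 hsumw
    exact this
  -- the (t₀ + h) entry
  set S : ℂ := ∑ k, ((Q k a ^ 2 : ℝ) : ℂ) * Complex.exp (Complex.I * h * (μ k : ℂ))
    with hSdef
  have hUt : timeEvo H (t₀ + h) a b = γ * S := by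
    rw [entry_formula H μ Q hQ hHQ (t₀ + h) a b, hSdef, Finset.mul_sum]
    refine Finset.sum_congr rfl fun k _ => ?_
    have hsplit : Complex.exp (Complex.I * (t₀ + h : ℝ) * (μ k : ℂ))
        = z k * Complex.exp (Complex.I * h * (μ k : ℂ)) := by
      rw [hzdef, ← Complex.exp_add]
      congr 1
      push_cast
      ring
    calc (Q k a : ℂ) * (Q k b : ℂ) * Complex.exp (Complex.I * (t₀ + h : ℝ) * (μ k : ℂ))
        = (((f k : ℝ) : ℂ) * z k) * Complex.exp (Complex.I * h * (μ k : ℂ)) := by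
          rw [hsplit, hfdef]; push_cast; ring
      _ = (((Q k a ^ 2 : ℝ) : ℂ) * γ) * Complex.exp (Complex.I * h * (μ k : ℂ)) := by
          rw [hT k]
      _ = γ * (((Q k a ^ 2 : ℝ) : ℂ) * Complex.exp (Complex.I * h * (μ k : ℂ))) := by
          ring
  have habsS : ‖timeEvo H (t₀ + h) a b‖ = ‖S‖ := by
    rw [hUt, norm_mul, hγ1, one_mul]
  -- real analysis setup
  have hgap : 0 < ν₁ - ν₀ := by linarith
  set d' : ℝ := |h| * (ν₁ - ν₀) / 2 with hd'def
  have hd'0 : 0 < d' := by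
    rw [hd'def]; positivity
  have hd'lt : d' < Real.pi / 2 := by
    have := (lt_div_iff₀ hgap).mp hh
    rw [hd'def]; linarith
  have hπ := Real.pi_pos
  have hcosd_pos : 0 < Real.cos d' := Real.cos_pos_of_mem_Ioo ⟨by linarith, hd'lt⟩
  set cmid : ℝ := h * (ν₀ + ν₁) / 2 with hcmiddef
  set θ : Fin n → ℝ := fun k => h * μ k - cmid with hθdef
  have hμk_mem : ∀ k : Fin n, ν₀ ≤ μ k ∧ μ k ≤ ν₁ := by
    intro k
    constructor
    · exact hmono (by rw [Fin.le_def]; simp [hadef])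
    · exact hmono (by rw [Fin.le_def]; simp; omega)
  have hθle : ∀ k, |θ k| ≤ d' := by
    intro k
    have hk := hμk_mem k
    have : θ k = h * (μ k - (ν₀ + ν₁) / 2) := by rw [hθdef, hcmiddef]; ring
    rw [this, abs_mul, hd'def]
    have h1 : |μ k - (ν₀ + ν₁) / 2| ≤ (ν₁ - ν₀) / 2 :=
      abs_le.mpr ⟨by linarith [hk.1, hk.2], by linarith [hk.1, hk.2]⟩
    calc |h| * |μ k - (ν₀ + ν₁) / 2| ≤ |h| * ((ν₁ - ν₀) / 2) :=
          mul_le_mul_of_nonneg_left h1 (abs_nonneg h)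
      _ = |h| * (ν₁ - ν₀) / 2 := by ring
  have hSθ : ∑ k, ((Q k a ^ 2 : ℝ) : ℂ) * Complex.exp (Complex.I * ((θ k : ℝ) : ℂ))
      = Complex.exp (-(Complex.I * (cmid : ℂ))) * S := by
    rw [hSdef, Finset.mul_sum]
    refine Finset.sum_congr rfl fun k _ => ?_
    rw [show Complex.exp (-(Complex.I * (cmid : ℂ)))
        * (((Q k a ^ 2 : ℝ) : ℂ) * Complex.exp (Complex.I * h * (μ k : ℂ)))
      = ((Q k a ^ 2 : ℝ) : ℂ)
        * (Complex.exp (-(Complex.I * (cmid : ℂ))) * Complex.exp (Complex.I * h * (μ k : ℂ)))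
      from by ring, ← Complex.exp_add]
    congr 2
    rw [hθdef]
    push_cast
    ring
  -- the RHS of heq equals cos d' ^ 2
  have hRHS : (1 / 4 : ℝ) * ‖Complex.exp (Complex.I * (h:ℂ) * (ν₀:ℂ))
      + Complex.exp (Complex.I * (h:ℂ) * (ν₁:ℂ))‖ ^ 2 = Real.cos d' ^ 2 := by
    set e : ℝ := h * (ν₁ - ν₀) / 2 with hedef
    have hsplit : Complex.exp (Complex.I * (h:ℂ) * (ν₀:ℂ))
        + Complex.exp (Complex.I * (h:ℂ) * (ν₁:ℂ))
        = Complex.exp (Complex.I * (cmid : ℂ))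
          * (Complex.exp (((-e : ℝ) : ℂ) * Complex.I) + Complex.exp (((e : ℝ) : ℂ) * Complex.I)) := by
      rw [mul_add, ← Complex.exp_add, ← Complex.exp_add]
      congr 2
      · rw [hcmiddef, hedef]; push_cast; ring
      · rw [hcmiddef, hedef]; push_cast; ring
    have hcos2 : Complex.exp (((-e : ℝ) : ℂ) * Complex.I) + Complex.exp (((e : ℝ) : ℂ) * Complex.I)
        = ((2 * Real.cos e : ℝ) : ℂ) := by
      rw [Complex.exp_mul_I, Complex.exp_mul_I]
      push_cast [Complex.cos_neg, Complex.sin_neg]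
      ring
    have hcose : Real.cos e = Real.cos d' := by
      have h1 : |e| = d' := by
        rw [hedef, hd'def, abs_div, abs_mul, abs_of_pos hgap]
        norm_num
      rw [← Real.cos_abs e, h1]
    have hre0 : (Complex.I * (cmid:ℂ)).re = 0 := by simp
    rw [hsplit, norm_mul, Complex.norm_exp, hre0, Real.exp_zero, one_mul,
      hcos2, Complex.norm_real, Real.norm_eq_abs, hcose,
      abs_of_pos (by linarith : (0:ℝ) < 2 * Real.cos d')]
    ring
  have habsS_val : ‖S‖ = Real.cos d' := by
    have h2 : ‖S‖ ^ 2 = Real.cos d' ^ 2 := by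
      rw [← habsS, heq, hRHS]
    have h3 : (‖S‖ - Real.cos d') * (‖S‖ + Real.cos d') = 0 := by
      linear_combination h2
    have h5 := norm_nonneg S
    rcases mul_eq_zero.mp h3 with h4 | h4
    · linarith
    · linarith
  have habsθ : ‖∑ k, ((Q k a ^ 2 : ℝ) : ℂ)
      * Complex.exp (Complex.I * ((θ k : ℝ) : ℂ))‖ = Real.cos d' := by
    have hre0 : (-(Complex.I * (cmid:ℂ))).re = 0 := by simp
    rw [hSθ, norm_mul, Complex.norm_exp, hre0, Real.exp_zero, one_mul, habsS_val]
  have hsupport := cos_equal (fun k => Q k a ^ 2) θ d' (fun k => sq_nonneg _)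
    hsumw hd'0 hd'lt hθle habsθ
  -- eigenvalue support
  have hP2 : ∀ k : Fin n, Q k a ≠ 0 → μ k = ν₀ ∨ μ k = ν₁ := by
    intro k hka
    rcases hsupport k with h0 | h1
    · exact absurd (pow_eq_zero_iff two_ne_zero |>.mp h0) hka
    · have hθk : θ k = h * (μ k - (ν₀ + ν₁) / 2) := by rw [hθdef, hcmiddef]; ring
      rw [hθk, abs_mul, hd'def] at h1
      have habsh : |h| ≠ 0 := ne_of_gt hh0
      have h2 : |μ k - (ν₀ + ν₁) / 2| = (ν₁ - ν₀) / 2 := by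
        have : |h| * |μ k - (ν₀ + ν₁) / 2| = |h| * ((ν₁ - ν₀) / 2) := by linarith
        exact mul_left_cancel₀ habsh this
      rcases abs_eq (by linarith : (0:ℝ) ≤ (ν₁ - ν₀) / 2) |>.mp h2 with h3 | h3
      · right
        have := hμk_mem k
        apply le_antisymm (this.2)
        linarith
      · left
        have := hμk_mem k
        apply le_antisymm ?_ (this.1)
        linarith
  -- witnesses on both extreme eigenvalues
  have hν01 : ν₀ ≠ ν₁ := ne_of_lt hν
  have hcoslt1 : Real.cos d' < 1 := by
    have := Real.cos_lt_cos_of_nonneg_of_le_pi (le_refl 0) (by linarith : d' ≤ Real.pi) hd'0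
    rwa [Real.cos_zero] at this
  have hwit : ∀ ν : ℝ, (∀ k : Fin n, Q k a ≠ 0 → μ k = ν) → False := by
    intro ν hcon
    have hSval : S = Complex.exp (Complex.I * h * (ν : ℂ)) := by
      rw [hSdef]
      have hptw2 : ∀ k : Fin n, ((Q k a ^ 2 : ℝ) : ℂ) * Complex.exp (Complex.I * h * (μ k : ℂ))
          = ((Q k a ^ 2 : ℝ) : ℂ) * Complex.exp (Complex.I * h * (ν : ℂ)) := by
        intro k
        by_cases hka : Q k a = 0
        · rw [hka]; norm_num
        · rw [hcon k hka]
      rw [Finset.sum_congr rfl fun k _ => hptw2 k, ← Finset.sum_mul, ← Complex.ofReal_sum,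
        hsumw]
      norm_num
    have : ‖S‖ = 1 := by
      rw [hSval, Complex.norm_exp]
      have : (Complex.I * h * (ν : ℂ)).re = 0 := by simp
      rw [this, Real.exp_zero]
    rw [habsS_val] at this
    linarith
  have hwit1 : ∃ k : Fin n, μ k = ν₁ ∧ Q k a ≠ 0 := by
    by_contra hcon
    push_neg at hcon
    refine hwit ν₀ fun k hka => ?_
    rcases hP2 k hka with h0 | h1
    · exact h0
    · exact absurd (hcon k h1) hka
  have hwit0 : ∃ k : Fin n, μ k = ν₀ ∧ Q k a ≠ 0 := by
    by_contra hcon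
    push_neg at hcon
    refine hwit ν₁ fun k hka => ?_
    rcases hP2 k hka with h0 | h1
    · exact absurd (hcon k h0) hka
    · exact h1
  obtain ⟨k₁, hk₁μ, hk₁a⟩ := hwit1
  obtain ⟨k₀, hk₀μ, hk₀a⟩ := hwit0
  -- per-eigenvalue proportionality
  have hrel : ∀ k₂ : Fin n, Q k₂ a ≠ 0 → ∀ k : Fin n, μ k = μ k₂ →
      Q k b = (Q k₂ b / Q k₂ a) * Q k a := by
    intro k₂ hk₂ k hμk
    by_cases hka : Q k a = 0
    · have hb2 : Q k b ^ 2 = 0 := by rw [hP1 k, hka]; ring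
      rw [pow_eq_zero_iff two_ne_zero |>.mp hb2, hka, mul_zero]
    · have h1 := hT k
      have h2 := hT k₂
      rw [hzdef] at h1 h2
      simp only at h1 h2
      rw [hμk] at h1
      -- h1 : ↑(f k) * exp (I t₀ μ k₂) = ↑(Q k a ^2) * γ
      have h3 : (((f k * Q k₂ a ^ 2 : ℝ)) : ℂ) * Complex.exp (Complex.I * t₀ * (μ k₂ : ℂ))
          = (((Q k a ^ 2 * f k₂ : ℝ)) : ℂ) * Complex.exp (Complex.I * t₀ * (μ k₂ : ℂ)) := by
        push_cast
        calc ((f k : ℝ) : ℂ) * ((Q k₂ a : ℝ) : ℂ) ^ 2 * Complex.exp (Complex.I * t₀ * (μ k₂ : ℂ))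
            = (((Q k₂ a ^ 2 : ℝ)) : ℂ) * (((f k : ℝ) : ℂ) * Complex.exp (Complex.I * t₀ * (μ k₂ : ℂ))) := by
              push_cast; ring
          _ = (((Q k₂ a ^ 2 : ℝ)) : ℂ) * ((((Q k a ^ 2 : ℝ)) : ℂ) * γ) := by rw [h1]
          _ = (((Q k a ^ 2 : ℝ)) : ℂ) * ((((f k₂ : ℝ)) : ℂ) * Complex.exp (Complex.I * t₀ * (μ k₂ : ℂ))) := by
              rw [h2]; push_cast; ring
          _ = ((Q k a : ℝ) : ℂ) ^ 2 * ((f k₂ : ℝ) : ℂ) * Complex.exp (Complex.I * t₀ * (μ k₂ : ℂ)) := by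
              push_cast; ring
      have h4 : ((f k * Q k₂ a ^ 2 : ℝ) : ℂ) = ((Q k a ^ 2 * f k₂ : ℝ) : ℂ) :=
        mul_right_cancel₀ (Complex.exp_ne_zero _) h3
      have h5 : f k * Q k₂ a ^ 2 = Q k a ^ 2 * f k₂ := by exact_mod_cast h4
      simp only [hfdef] at h5
      rw [div_mul_eq_mul_div, eq_div_iff hk₂]
      apply mul_left_cancel₀ (mul_ne_zero hka hk₂)
      linear_combination h5
  set ε : ℝ := Q k₀ b / Q k₀ a with hεdef
  set ε' : ℝ := Q k₁ b / Q k₁ a with hε'def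
  have hε2 : ε ^ 2 = 1 := by
    rw [hεdef, div_pow, hP1 k₀, div_self (pow_ne_zero 2 hk₀a)]
  have hε'2 : ε' ^ 2 = 1 := by
    rw [hε'def, div_pow, hP1 k₁, div_self (pow_ne_zero 2 hk₁a)]
  have hrel0 : ∀ k : Fin n, μ k = ν₀ → Q k b = ε * Q k a := fun k hk =>
    hrel k₀ hk₀a k (by rw [hk, hk₀μ])
  have hrel1 : ∀ k : Fin n, μ k = ν₁ → Q k b = ε' * Q k a := fun k hk =>
    hrel k₁ hk₁a k (by rw [hk, hk₁μ])
  have hsum0 : ∑ k, f k = 0 := by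
    have h0 := horth a b
    rw [if_neg hab] at h0
    exact h0
  have hεε : ε' = -ε := by
    by_contra hcon
    have hee : ε' = ε := by
      have h0 : (ε - ε') * (ε + ε') = 0 := by linear_combination hε2 - hε'2
      rcases mul_eq_zero.mp h0 with h1 | h2
      · have := sub_eq_zero.mp h1; linarith
      · exact absurd (by linarith : ε' = -ε) hcon
    have hfe : ∀ k : Fin n, f k = ε * Q k a ^ 2 := by
      intro k
      by_cases hka : Q k a = 0
      · have hb2 : Q k b ^ 2 = 0 := by rw [hP1 k, hka]; ring
        simp only [hfdef]
        rw [pow_eq_zero_iff two_ne_zero |>.mp hb2, hka]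
        ring
      · rcases hP2 k hka with h0 | h1
        · simp only [hfdef]; rw [hrel0 k h0]; ring
        · simp only [hfdef]; rw [hrel1 k h1, hee]; ring
    have : (0:ℝ) = ε := by
      rw [← hsum0, Finset.sum_congr rfl fun k _ => hfe k, ← Finset.mul_sum, hsumw, mul_one]
    rw [← this] at hε2
    norm_num at hε2
  have hσ : ∀ k : Fin n, Q k b = (if μ k = ν₁ then -ε else ε) * Q k a := by
    intro k
    by_cases hk1 : μ k = ν₁
    · rw [if_pos hk1, ← hεε]; exact hrel1 k hk1
    · rw [if_neg hk1]
      by_cases hka : Q k a = 0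
      · have hb2 : Q k b ^ 2 = 0 := by rw [hP1 k, hka]; ring
        rw [pow_eq_zero_iff two_ne_zero |>.mp hb2, hka, mul_zero]
      · rcases hP2 k hka with h0 | h1
        · exact hrel0 k h0
        · exact absurd h1 hk1
  -- key pointwise identities
  have key1 : ∀ k : Fin n, μ k * Q k a
      = (ν₀ + ν₁) / 2 * Q k a + (-ε * (ν₁ - ν₀) / 2) * Q k b := by
    intro k
    by_cases hka : Q k a = 0
    · have hb2 : Q k b ^ 2 = 0 := by rw [hP1 k, hka]; ring
      rw [pow_eq_zero_iff two_ne_zero |>.mp hb2, hka]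
      ring
    · have hσk := hσ k
      rcases hP2 k hka with h0 | h1
      · rw [if_neg (by rw [h0]; exact hν01)] at hσk
        rw [h0, hσk]
        linear_combination ((ν₁ - ν₀) / 2 * Q k a) * hε2
      · rw [if_pos h1] at hσk
        rw [h1, hσk]
        linear_combination (-(ν₁ - ν₀) / 2 * Q k a) * hε2
  have key2 : ∀ k : Fin n, μ k * Q k b
      = (ε * (ν₀ - ν₁) / 2) * Q k a + (ν₀ + ν₁) / 2 * Q k b := by
    intro k
    by_cases hka : Q k a = 0
    · have hb2 : Q k b ^ 2 = 0 := by rw [hP1 k, hka]; ring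
      rw [pow_eq_zero_iff two_ne_zero |>.mp hb2, hka]
      ring
    · have hσk := hσ k
      rcases hP2 k hka with h0 | h1
      · rw [if_neg (by rw [h0]; exact hν01)] at hσk
        rw [h0, hσk]
        ring
      · rw [if_pos h1] at hσk
        rw [h1, hσk]
        ring
  -- rows outside {a,b} vanish on columns a, b
  have hjab : ∀ j : Fin n, j ≠ a → j ≠ b → H j a = 0 ∧ H j b = 0 := by
    intro j hja hjb
    have hoa := horth j a
    rw [if_neg hja] at hoa
    have hob := horth j b
    rw [if_neg hjb] at hob
    constructor
    · rw [hHent j a]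
      have e1 : ∀ k : Fin n, Q k j * μ k * Q k a
          = (ν₀ + ν₁) / 2 * (Q k j * Q k a) + (-ε * (ν₁ - ν₀) / 2) * (Q k j * Q k b) :=
        fun k => by linear_combination Q k j * key1 k
      rw [Finset.sum_congr rfl fun k _ => e1 k, Finset.sum_add_distrib,
        ← Finset.mul_sum, ← Finset.mul_sum, hoa, hob]
      ring
    · rw [hHent j b]
      have e2 : ∀ k : Fin n, Q k j * μ k * Q k b
          = (ε * (ν₀ - ν₁) / 2) * (Q k j * Q k a) + (ν₀ + ν₁) / 2 * (Q k j * Q k b) :=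
        fun k => by linear_combination Q k j * key2 k
      rw [Finset.sum_congr rfl fun k _ => e2 k, Finset.sum_add_distrib,
        ← Finset.mul_sum, ← Finset.mul_sum, hoa, hob]
      ring
  -- powers of H keep the zero pattern
  have hpow : ∀ (k : ℕ) (j : Fin n), j ≠ a → j ≠ b → (H ^ k) j a = 0 := by
    intro k
    induction k with
    | zero =>
      intro j hja _
      simp [Matrix.one_apply_ne hja]
    | succ k ih =>
      intro j hja hjb
      rw [pow_succ', Matrix.mul_apply]
      apply Finset.sum_eq_zero
      intro l _
      by_cases hla : l = a
      · rw [hla, (hjab j hja hjb).1, zero_mul]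
      · by_cases hlb : l = b
        · rw [hlb, (hjab j hja hjb).2, zero_mul]
        · rw [ih l hla hlb, mul_zero]
  -- conclude n = 2
  have hn2 : n = 2 := by
    by_contra hne
    have h3 : 2 < n := by omega
    set j : Fin n := ⟨2, h3⟩ with hjdef
    have hja : j ≠ a := by
      intro hc
      have := congrArg Fin.val hc
      simp [hjdef, hadef] at this
    have hjb : j ≠ b := by
      intro hc
      have := congrArg Fin.val hc
      simp [hjdef, hbdef] at this
    obtain ⟨k, hk, hkpos⟩ := hirr j a hja
    rw [hpow k j hja hjb] at hkpos
    exact lt_irrefl 0 hkpos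
  -- identify the two-vertex structure
  have hcases : ∀ i : Fin n, i = a ∨ i = b := by
    intro i
    have hi : i.val < 2 := by have := i.isLt; omega
    have hi' : i.val = 0 ∨ i.val = 1 := by omega
    rcases hi' with h0 | h1
    · left; exact Fin.ext h0
    · right; exact Fin.ext h1
  have hsymm : H b a = H a b := by
    have := hH
    rw [Matrix.IsSymm] at this
    calc H b a = Hᵀ a b := rfl
      _ = H a b := by rw [this]
  have hcpos : 0 < H a b := by
    rcases lt_or_eq_of_le (hnonneg a b) with hpos | hzero
    · exact hpos
    · exfalso
      have hH0 : H = 0 := by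
        ext i j
        rcases hcases i with rfl | rfl <;> rcases hcases j with rfl | rfl
        · rw [hdiag]; rfl
        · rw [← hzero]; rfl
        · rw [hsymm, ← hzero]; rfl
        · rw [hdiag]; rfl
      obtain ⟨k, hk, hkpos⟩ := hirr a b hab
      rw [hH0, zero_pow (Nat.pos_iff_ne_zero.mp hk)] at hkpos
      simp at hkpos
  refine ⟨hn2, H a b, hcpos, ?_⟩
  intro i j
  rcases hcases i with rfl | rfl <;> rcases hcases j with rfl | rfl
  · rw [if_pos rfl, hdiag]
  · rw [if_neg hab]
  · rw [if_neg (fun hc => hab hc.symm), hsymm]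
  · rw [if_pos rfl, hdiag]
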